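/- Let B be a divergence-free C² vector field on ℝ³ with |B| > 0, τ = B/|B|, and let ρ > 0, S, and the C¹ functions c_par(S), c_perp(S) be given, with p_par = c_par(S) ρ³/|B|², p_perp = c_perp(S) ρ |B|, pressure tensor 𝗉 = p_perp I + (p_par − p_perp) τ⊗τ, and enthalpy h = (3p_par + 2p_perp)/(2ρ). Then τ · ( (1/ρ)∇·𝗉 − ∇h ) = −( (p_par/(2ρ)) τ·∇ ln c_par(S) + (p_perp/ρ) τ·∇ ln c_perp(S) ). -/

import Mathlib

open scoped BigOperators

noncomputable section

/-- Space: ℝ³ as functions `Fin 3 → ℝ`. -/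
abbrev V3 := Fin 3 → ℝ

/-- Partial derivative of a scalar field in the `i`-th coordinate direction. -/
def pd (i : Fin 3) (f : V3 → ℝ) (x : V3) : ℝ := fderiv ℝ f x (Pi.single i 1)

/-- Euclidean dot product on ℝ³. -/
def dot3 (a b : V3) : ℝ := ∑ i, a i * b i

/-- Cross product on ℝ³. -/
def cross3 (a b : V3) : V3 :=
  ![a 1 * b 2 - a 2 * b 1, a 2 * b 0 - a 0 * b 2, a 0 * b 1 - a 1 * b 0]

/-- Divergence of a vector field on ℝ³. -/
def div3 (F : V3 → V3) (x : V3) : ℝ := ∑ i, pd i (fun y => F y i) x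

/-- Curl of a vector field on ℝ³. -/
def curl3 (F : V3 → V3) (x : V3) : V3 :=
  ![pd 1 (fun y => F y 2) x - pd 2 (fun y => F y 1) x,
    pd 2 (fun y => F y 0) x - pd 0 (fun y => F y 2) x,
    pd 0 (fun y => F y 1) x - pd 1 (fun y => F y 0) x]

/-- Gradient of a scalar field on ℝ³. -/
def grad3 (f : V3 → ℝ) (x : V3) : V3 := fun i => pd i f x

/-- Euclidean norm on ℝ³. -/
def norm3 (a : V3) : ℝ := Real.sqrt (dot3 a a)

/-- Unit vector along a vector field. -/
def tau3 (B : V3 → V3) (x : V3) : V3 := fun i => B x i / norm3 (B x)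

section PdLemmas

variable {f g : V3 → ℝ} {x : V3} {i : Fin 3}

lemma pd_const (c : ℝ) : pd i (fun _ => c) x = 0 := by simp [pd]

lemma pd_add (hf : DifferentiableAt ℝ f x) (hg : DifferentiableAt ℝ g x) :
    pd i (fun y => f y + g y) x = pd i f x + pd i g x := by
  simp [pd, fderiv_fun_add hf hg]

lemma pd_sub (hf : DifferentiableAt ℝ f x) (hg : DifferentiableAt ℝ g x) :
    pd i (fun y => f y - g y) x = pd i f x - pd i g x := by
  simp [pd, fderiv_fun_sub hf hg]

lemma pd_mul (hf : DifferentiableAt ℝ f x) (hg : DifferentiableAt ℝ g x) :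
    pd i (fun y => f y * g y) x = pd i f x * g x + f x * pd i g x := by
  simp [pd, fderiv_fun_mul hf hg]; ring

lemma pd_comp (u : ℝ → ℝ) (hu : DifferentiableAt ℝ u (f x)) (hf : DifferentiableAt ℝ f x) :
    pd i (fun y => u (f y)) x = deriv u (f x) * pd i f x := by
  have := (hu.hasDerivAt.comp_hasFDerivAt x hf.hasFDerivAt)
  rw [pd, show (fun y => u (f y)) = u ∘ f from rfl, this.fderiv]
  simp [pd]

lemma pd_inv (hg : DifferentiableAt ℝ g x) (h0 : g x ≠ 0) :
    pd i (fun y => (g y)⁻¹) x = -((g x) ^ 2)⁻¹ * pd i g x := by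
  have hu : DifferentiableAt ℝ (fun t : ℝ => t⁻¹) (g x) := differentiableAt_inv h0
  rw [pd_comp _ hu hg, deriv_inv]

lemma diffAt_div (hf : DifferentiableAt ℝ f x) (hg : DifferentiableAt ℝ g x)
    (h0 : g x ≠ 0) : DifferentiableAt ℝ (fun y => f y / g y) x := by
  simp only [div_eq_mul_inv]; exact hf.mul (hg.inv h0)

lemma pd_div (hf : DifferentiableAt ℝ f x) (hg : DifferentiableAt ℝ g x) (h0 : g x ≠ 0) :
    pd i (fun y => f y / g y) x = (pd i f x * g x - f x * pd i g x) / (g x) ^ 2 := by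
  simp only [div_eq_mul_inv]
  rw [pd_mul (g := fun y => (g y)⁻¹) hf (hg.inv h0), pd_inv hg h0]
  field_simp
  ring

lemma pd_sqrt (hf : DifferentiableAt ℝ f x) (h0 : f x ≠ 0) :
    pd i (fun y => Real.sqrt (f y)) x = pd i f x / (2 * Real.sqrt (f x)) := by
  rw [pd, (hf.hasFDerivAt.sqrt h0).fderiv]
  simp [pd]
  ring

lemma pd_log (hf : DifferentiableAt ℝ f x) (h0 : f x ≠ 0) :
    pd i (fun y => Real.log (f y)) x = pd i f x / f x := by
  rw [pd_comp Real.log (Real.differentiableAt_log h0) hf, Real.deriv_log]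
  ring

lemma pd_pow3 (hf : DifferentiableAt ℝ f x) :
    pd i (fun y => f y ^ 3) x = 3 * f x ^ 2 * pd i f x := by
  rw [pd_comp (fun t => t ^ 3) (differentiableAt_pow 3) hf]
  simp

lemma pd_pow2 (hf : DifferentiableAt ℝ f x) :
    pd i (fun y => f y ^ 2) x = 2 * f x * pd i f x := by
  rw [pd_comp (fun t => t ^ 2) (differentiableAt_pow 2) hf]
  simp

end PdLemmas
lemma main_algebra (t0 t1 t2 d00 d01 d02 d10 d11 d12 d20 d21 d22
    e0 e1 e2 p0 p1 p2 a0 a1 a2 c0 c1 c2 b r Pp Pq : ℝ)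
    (hb : b ≠ 0) (hr : r ≠ 0)
    (R1 : t0^2 + t1^2 + t2^2 = 1)
    (R20 : t0*d00 + t1*d01 + t2*d02 = 0)
    (R21 : t0*d10 + t1*d11 + t2*d12 = 0)
    (R22 : t0*d20 + t1*d21 + t2*d22 = 0)
    (R3 : d00 + d11 + d22 = -((t0*e0 + t1*e1 + t2*e2)/b)) :
    t0 * ((1/r)*(((Pq*c0 + Pq*p0/r + Pq*e0/b)*1 + ((Pp*a0 + 3*Pp*p0/r - 2*Pp*e0/b) - (Pq*c0 + Pq*p0/r + Pq*e0/b))*t0*t0 + (Pp - Pq)*(d00*t0 + t0*d00)) + ((Pq*c1 + Pq*p1/r + Pq*e1/b)*0 + ((Pp*a1 + 3*Pp*p1/r - 2*Pp*e1/b) - (Pq*c1 + Pq*p1/r + Pq*e1/b))*t0*t1 + (Pp - Pq)*(d10*t1 + t0*d11)) + ((Pq*c2 + Pq*p2/r + Pq*e2/b)*0 + ((Pp*a2 + 3*Pp*p2/r - 2*Pp*e2/b) - (Pq*c2 + Pq*p2/r + Pq*e2/b))*t0*t2 + (Pp - Pq)*(d20*t2 + t0*d22))) - (((3*(Pp*a0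 + 3*Pp*p0/r - 2*Pp*e0/b) + 2*(Pq*c0 + Pq*p0/r + Pq*e0/b))*(2*r) - (3*Pp+2*Pq)*(2*p0))/(2*r)^2)) + t1 * ((1/r)*(((Pq*c0 + Pq*p0/r + Pq*e0/b)*0 + ((Pp*a0 + 3*Pp*p0/r - 2*Pp*e0/b) - (Pq*c0 + Pq*p0/r + Pq*e0/b))*t1*t0 + (Pp - Pq)*(d01*t0 + t1*d00)) + ((Pq*c1 + Pq*p1/r + Pq*e1/b)*1 + ((Pp*a1 + 3*Pp*p1/r - 2*Pp*e1/b) - (Pq*c1 + Pq*p1/r + Pq*e1/b))*t1*t1 + (Pp - Pq)*(d11*t1 + t1*d11)) + ((Pq*c2 + Pq*p2/r + Pq*e2/b)*0 + ((Pp*a2 + 3*Pp*p2/r - 2*Pp*e2/b) - (Pq*c2 + Pq*p2/r + Pq*e2/b))*t1*t2 + (Pp - Pq)*(d21*t2 + t1*d22))) - (((3*(Pp*a1 + 3*Pp*p1/r - 2*Pp*e1/b) + 2*(Pq*c1 + Pq*p1/r + Pq*e1/b))*(2*r) - (3*Pp+2*Pq)*(2*p1))/(2*r)^2)) + t2 *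 ((1/r)*(((Pq*c0 + Pq*p0/r + Pq*e0/b)*0 + ((Pp*a0 + 3*Pp*p0/r - 2*Pp*e0/b) - (Pq*c0 + Pq*p0/r + Pq*e0/b))*t2*t0 + (Pp - Pq)*(d02*t0 + t2*d00)) + ((Pq*c1 + Pq*p1/r + Pq*e1/b)*0 + ((Pp*a1 + 3*Pp*p1/r - 2*Pp*e1/b) - (Pq*c1 + Pq*p1/r + Pq*e1/b))*t2*t1 + (Pp - Pq)*(d12*t1 + t2*d11)) + ((Pq*c2 + Pq*p2/r + Pq*e2/b)*1 + ((Pp*a2 + 3*Pp*p2/r - 2*Pp*e2/b) - (Pq*c2 + Pq*p2/r + Pq*e2/b))*t2*t2 + (Pp - Pq)*(d22*t2 + t2*d22))) - (((3*(Pp*a2 + 3*Pp*p2/r - 2*Pp*e2/b) + 2*(Pq*c2 + Pq*p2/r + Pq*e2/b))*(2*r) - (3*Pp+2*Pq)*(2*p2))/(2*r)^2))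
    = -((Pp/(2*r))*(t0*a0+t1*a1+t2*a2) + (Pq/r)*(t0*c0+t1*c1+t2*c2)) := by
  have key : t0 * ((1/r)*(((Pq*c0 + Pq*p0/r + Pq*e0/b)*1 + ((Pp*a0 + 3*Pp*p0/r - 2*Pp*e0/b) - (Pq*c0 + Pq*p0/r + Pq*e0/b))*t0*t0 + (Pp - Pq)*(d00*t0 + t0*d00)) + ((Pq*c1 + Pq*p1/r + Pq*e1/b)*0 + ((Pp*a1 + 3*Pp*p1/r - 2*Pp*e1/b) - (Pq*c1 + Pq*p1/r + Pq*e1/b))*t0*t1 + (Pp - Pq)*(d10*t1 + t0*d11)) + ((Pq*c2 + Pq*p2/r + Pq*e2/b)*0 + ((Pp*a2 + 3*Pp*p2/r - 2*Pp*e2/b) - (Pq*c2 + Pq*p2/r + Pq*e2/b))*t0*t2 + (Pp - Pq)*(d20*t2 + t0*d22))) - (((3*(Pp*a0 + 3*Pp*p0/r - 2*Pp*e0/b) + 2*(Pq*c0 + Pq*p0/r + Pq*e0/b))*(2*r) - (3*Pp+2*Pq)*(2*p0))/(2*r)^2)) + t1 * ((1/r)*(((Pq*c0 + Pq*p0/r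 + Pq*e0/b)*0 + ((Pp*a0 + 3*Pp*p0/r - 2*Pp*e0/b) - (Pq*c0 + Pq*p0/r + Pq*e0/b))*t1*t0 + (Pp - Pq)*(d01*t0 + t1*d00)) + ((Pq*c1 + Pq*p1/r + Pq*e1/b)*1 + ((Pp*a1 + 3*Pp*p1/r - 2*Pp*e1/b) - (Pq*c1 + Pq*p1/r + Pq*e1/b))*t1*t1 + (Pp - Pq)*(d11*t1 + t1*d11)) + ((Pq*c2 + Pq*p2/r + Pq*e2/b)*0 + ((Pp*a2 + 3*Pp*p2/r - 2*Pp*e2/b) - (Pq*c2 + Pq*p2/r + Pq*e2/b))*t1*t2 + (Pp - Pq)*(d21*t2 + t1*d22))) - (((3*(Pp*a1 + 3*Pp*p1/r - 2*Pp*e1/b) + 2*(Pq*c1 + Pq*p1/r + Pq*e1/b))*(2*r) - (3*Pp+2*Pq)*(2*p1))/(2*r)^2)) + t2 * ((1/r)*(((Pq*c0 + Pq*p0/r + Pq*e0/b)*0 + ((Pp*a0 + 3*Pp*p0/r - 2*Pp*e0/b) - (Pq*c0 + Pq*p0/r + Pq*e0/b))*t2*t0 + (Pp - Pq)*(d02*t0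 + t2*d00)) + ((Pq*c1 + Pq*p1/r + Pq*e1/b)*0 + ((Pp*a1 + 3*Pp*p1/r - 2*Pp*e1/b) - (Pq*c1 + Pq*p1/r + Pq*e1/b))*t2*t1 + (Pp - Pq)*(d12*t1 + t2*d11)) + ((Pq*c2 + Pq*p2/r + Pq*e2/b)*1 + ((Pp*a2 + 3*Pp*p2/r - 2*Pp*e2/b) - (Pq*c2 + Pq*p2/r + Pq*e2/b))*t2*t2 + (Pp - Pq)*(d22*t2 + t2*d22))) - (((3*(Pp*a2 + 3*Pp*p2/r - 2*Pp*e2/b) + 2*(Pq*c2 + Pq*p2/r + Pq*e2/b))*(2*r) - (3*Pp+2*Pq)*(2*p2))/(2*r)^2)) = (1/r)*( (t0*(Pq*c0 + Pq*p0/r + Pq*e0/b) + t1*(Pq*c1 + Pq*p1/r + Pq*e1/b) + t2*(Pq*c2 + Pq*p2/r + Pq*e2/b)) + (t0^2+t1^2+t2^2)*(t0*((Pp*a0 + 3*Pp*p0/r - 2*Pp*e0/b) - (Pq*c0 + Pq*p0/r + Pq*e0/b)) + t1*((Pp*a1 + 3*Pp*p1/r - 2*Pp*e1/b) - (Pq*c1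 + Pq*p1/r + Pq*e1/b)) + t2*((Pp*a2 + 3*Pp*p2/r - 2*Pp*e2/b) - (Pq*c2 + Pq*p2/r + Pq*e2/b))) + (Pp - Pq)*( t0*(t0*d00 + t1*d01 + t2*d02) + t1*(t0*d10 + t1*d11 + t2*d12) + t2*(t0*d20 + t1*d21 + t2*d22) + (t0^2+t1^2+t2^2)*(d00 + d11 + d22) ) ) - (t0*(((3*(Pp*a0 + 3*Pp*p0/r - 2*Pp*e0/b) + 2*(Pq*c0 + Pq*p0/r + Pq*e0/b))*(2*r) - (3*Pp+2*Pq)*(2*p0))/(2*r)^2) + t1*(((3*(Pp*a1 + 3*Pp*p1/r - 2*Pp*e1/b) + 2*(Pq*c1 + Pq*p1/r + Pq*e1/b))*(2*r) - (3*Pp+2*Pq)*(2*p1))/(2*r)^2) + t2*(((3*(Pp*a2 + 3*Pp*p2/r - 2*Pp*e2/b) + 2*(Pq*c2 + Pq*p2/r + Pq*e2/b))*(2*r) - (3*Pp+2*Pq)*(2*p2))/(2*r)^2)) := by ring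
  rw [key, R1, R20, R21, R22, R3]
  field_simp
  ring

/-- Field-aligned component of `(1/ρ)∇·𝗉 − ∇h` for the CGL gyrotropic
pressure tensor `𝗉 = p⊥ I + (p∥ − p⊥) τ⊗τ` with `p∥ = c∥(S) ρ³/B²`,
`p⊥ = c⊥(S) ρB`, `h = (3p∥+2p⊥)/(2ρ)`: it reduces to the entropy-gradient
source term `−( (p∥/2ρ) τ·∇ln c∥(S) + (p⊥/ρ) τ·∇ln c⊥(S) )`. -/
theorem pressure_divergence_entropy_form
    (B : V3 → V3) (ρ S : V3 → ℝ) (cpar cperp : ℝ → ℝ)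
    (hB : ContDiff ℝ 2 B) (hρ : ContDiff ℝ 1 ρ) (hS : ContDiff ℝ 1 S)
    (hcpar : ContDiff ℝ 1 cpar) (hcperp : ContDiff ℝ 1 cperp)
    (hcparpos : ∀ s, 0 < cpar s) (hcperppos : ∀ s, 0 < cperp s)
    (hρpos : ∀ x, 0 < ρ x) (hBpos : ∀ x, 0 < norm3 (B x))
    (hdiv : ∀ x, div3 B x = 0) :
    ∀ x : V3,
      let ppar : V3 → ℝ := fun y => cpar (S y) * (ρ y) ^ 3 / (norm3 (B y)) ^ 2
      let pperp : V3 → ℝ := fun y => cperp (S y) * ρ y * norm3 (B y)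
      let ptens : V3 → Fin 3 → Fin 3 → ℝ := fun y i j =>
        pperp y * (if i = j then 1 else 0) + (ppar y - pperp y) * tau3 B y i * tau3 B y j
      let h : V3 → ℝ := fun y => (3 * ppar y + 2 * pperp y) / (2 * ρ y)
      ∑ i, tau3 B x i *
          ((1 / ρ x) * (∑ j, pd j (fun y => ptens y i j) x) - pd i h x)
        = -((ppar x / (2 * ρ x)) *
              (∑ i, tau3 B x i * pd i (fun y => Real.log (cpar (S y))) x)
            + (pperp x / ρ x) *
              (∑ i, tau3 B x i * pd i (fun y => Real.log (cperp (S y))) x)) := by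
  intro x
  have hB1 : Differentiable ℝ B := hB.differentiable (by norm_num)
  have hBd : ∀ j, Differentiable ℝ (fun y => B y j) := fun j => differentiable_pi.mp hB1 j
  have hρd : Differentiable ℝ ρ := hρ.differentiable one_ne_zero
  have hSd : Differentiable ℝ S := hS.differentiable one_ne_zero
  have hQ : ∀ y : V3, norm3 (B y) = Real.sqrt (B y 0 * B y 0 + B y 1 * B y 1 + B y 2 * B y 2) := by
    intro y; simp [norm3, dot3, Fin.sum_univ_three]
  have hQpos : ∀ y : V3, 0 < B y 0 * B y 0 + B y 1 * B y 1 + B y 2 * B y 2 := by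
    intro y; have := hBpos y; rw [hQ y] at this; exact Real.sqrt_pos.mp this
  have hQd : Differentiable ℝ (fun y : V3 => B y 0 * B y 0 + B y 1 * B y 1 + B y 2 * B y 2) :=
    (((hBd 0).mul (hBd 0)).add ((hBd 1).mul (hBd 1))).add ((hBd 2).mul (hBd 2))
  have hnBfun : (fun y : V3 => norm3 (B y))
      = fun y => Real.sqrt (B y 0 * B y 0 + B y 1 * B y 1 + B y 2 * B y 2) := funext hQ
  have hnBd : Differentiable ℝ (fun y : V3 => norm3 (B y)) := by
    rw [hnBfun]; exact fun y => (hQd y).sqrt (hQpos y).ne'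
  have hb2 : ∀ y : V3, norm3 (B y) ^ 2 = B y 0 * B y 0 + B y 1 * B y 1 + B y 2 * B y 2 := by
    intro y; rw [hQ y, Real.sq_sqrt (hQpos y).le]
  have hbx : norm3 (B x) ≠ 0 := (hBpos x).ne'
  have hrx : ρ x ≠ 0 := (hρpos x).ne'
  have hcpx : cpar (S x) ≠ 0 := (hcparpos (S x)).ne'
  have hcqx : cperp (S x) ≠ 0 := (hcperppos (S x)).ne'
  have hcparS : DifferentiableAt ℝ (fun y => cpar (S y)) x :=
    (hcpar.differentiable one_ne_zero (S x)).comp x (hSd x)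
  have hcperpS : DifferentiableAt ℝ (fun y => cperp (S y)) x :=
    (hcperp.differentiable one_ne_zero (S x)).comp x (hSd x)
  have hρ3 : DifferentiableAt ℝ (fun y => ρ y ^ 3) x := (hρd x).pow 3
  have hnB2 : DifferentiableAt ℝ (fun y => norm3 (B y) ^ 2) x := (hnBd x).pow 2
  have hnum1 : DifferentiableAt ℝ (fun y => cpar (S y) * ρ y ^ 3) x := hcparS.mul hρ3
  have hppard : DifferentiableAt ℝ (fun y => cpar (S y) * ρ y ^ 3 / norm3 (B y) ^ 2) x :=
    diffAt_div hnum1 hnB2 (pow_ne_zero 2 hbx)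
  have hpperpd : DifferentiableAt ℝ (fun y => cperp (S y) * ρ y * norm3 (B y)) x :=
    (hcperpS.mul (hρd x)).mul (hnBd x)
  have hsub : DifferentiableAt ℝ
      (fun y => cpar (S y) * ρ y ^ 3 / norm3 (B y) ^ 2 - cperp (S y) * ρ y * norm3 (B y)) x :=
    hppard.sub hpperpd
  have hτ : ∀ i, DifferentiableAt ℝ (fun y => B y i / norm3 (B y)) x :=
    fun i => diffAt_div (hBd i x) (hnBd x) hbx
  have hcS : ∀ k, pd k (fun y => cpar (S y)) x
      = cpar (S x) * pd k (fun y => Real.log (cpar (S y))) x := by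
    intro k; rw [pd_log hcparS hcpx]; field_simp
  have hcQ : ∀ k, pd k (fun y => cperp (S y)) x
      = cperp (S x) * pd k (fun y => Real.log (cperp (S y))) x := by
    intro k; rw [pd_log hcperpS hcqx]; field_simp
  have G1 : ∀ k, pd k (fun y => cpar (S y) * ρ y ^ 3 / norm3 (B y) ^ 2) x
      = (cpar (S x) * ρ x ^ 3 / norm3 (B x) ^ 2) * (pd k (fun y => Real.log (cpar (S y))) x) + 3 * (cpar (S x) * ρ x ^ 3 / norm3 (B x) ^ 2) * (pd k ρ x) / ρ x - 2 * (cpar (S x) * ρ x ^ 3 / norm3 (B x) ^ 2) * (pd k (fun y => norm3 (B y)) x) / norm3 (B x) := by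
    intro k
    rw [pd_div hnum1 hnB2 (pow_ne_zero 2 hbx), pd_mul hcparS hρ3, pd_pow3 (hρd x),
      pd_pow2 (hnBd x), hcS k]
    field_simp
  have G2 : ∀ k, pd k (fun y => cperp (S y) * ρ y * norm3 (B y)) x
      = (cperp (S x) * ρ x * norm3 (B x)) * (pd k (fun y => Real.log (cperp (S y))) x) + (cperp (S x) * ρ x * norm3 (B x)) * (pd k ρ x) / ρ x + (cperp (S x) * ρ x * norm3 (B x)) * (pd k (fun y => norm3 (B y)) x) / norm3 (B x) := by
    intro k
    rw [pd_mul (hcperpS.fun_mul (hρd x)) (hnBd x), pd_mul hcperpS (hρd x), hcQ k]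
    field_simp
  have R1 : (B x 0 / norm3 (B x)) ^ 2 + (B x 1 / norm3 (B x)) ^ 2 + (B x 2 / norm3 (B x)) ^ 2 = 1 := by
    have := hb2 x
    field_simp
    linear_combination -this
  have R2 : ∀ k : Fin 3, (B x 0 / norm3 (B x)) * (pd k (fun y => B y 0 / norm3 (B y)) x) + (B x 1 / norm3 (B x)) * (pd k (fun y => B y 1 / norm3 (B y)) x)
      + (B x 2 / norm3 (B x)) * (pd k (fun y => B y 2 / norm3 (B y)) x) = 0 := by
    intro k
    have hfun : (fun y : V3 => (B y 0 / norm3 (B y)) * (B y 0 / norm3 (B y))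
        + (B y 1 / norm3 (B y)) * (B y 1 / norm3 (B y))
        + (B y 2 / norm3 (B y)) * (B y 2 / norm3 (B y))) = fun _ : V3 => (1:ℝ) := by
      funext y
      have h2 := hb2 y
      have hny : norm3 (B y) ≠ 0 := (hBpos y).ne'
      field_simp
      linear_combination -h2
    have h0 : pd k (fun y : V3 => (B y 0 / norm3 (B y)) * (B y 0 / norm3 (B y))
        + (B y 1 / norm3 (B y)) * (B y 1 / norm3 (B y))
        + (B y 2 / norm3 (B y)) * (B y 2 / norm3 (B y))) x = 0 := by
      rw [hfun, pd_const]
    rw [pd_add (((hτ 0).fun_mul (hτ 0)).fun_add ((hτ 1).fun_mul (hτ 1))) ((hτ 2).fun_mul (hτ 2)),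
      pd_add ((hτ 0).fun_mul (hτ 0)) ((hτ 1).fun_mul (hτ 1)), pd_mul (hτ 0) (hτ 0),
      pd_mul (hτ 1) (hτ 1), pd_mul (hτ 2) (hτ 2)] at h0
    linarith [h0]
  have R3 : (pd 0 (fun y => B y 0 / norm3 (B y)) x) + (pd 1 (fun y => B y 1 / norm3 (B y)) x) + (pd 2 (fun y => B y 2 / norm3 (B y)) x)
      = -(((B x 0 / norm3 (B x)) * (pd 0 (fun y => norm3 (B y)) x) + (B x 1 / norm3 (B x)) * (pd 1 (fun y => norm3 (B y)) x) + (B x 2 / norm3 (B x)) * (pd 2 (fun y => norm3 (B y)) x)) / norm3 (B x)) := by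
    have hdivx : pd 0 (fun y => B y 0) x + pd 1 (fun y => B y 1) x + pd 2 (fun y => B y 2) x = 0 := by
      have := hdiv x
      simpa [div3, Fin.sum_univ_three] using this
    rw [pd_div (hBd 0 x) (hnBd x) hbx, pd_div (hBd 1 x) (hnBd x) hbx,
      pd_div (hBd 2 x) (hnBd x) hbx]
    field_simp
    linear_combination norm3 (B x) * hdivx
  have F4 : ∀ k : Fin 3, pd k (fun y =>
        (3 * (cpar (S y) * ρ y ^ 3 / norm3 (B y) ^ 2) + 2 * (cperp (S y) * ρ y * norm3 (B y)))
          / (2 * ρ y)) x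
      = ((3 * ((cpar (S x) * ρ x ^ 3 / norm3 (B x) ^ 2) * (pd k (fun y => Real.log (cpar (S y))) x) + 3 * (cpar (S x) * ρ x ^ 3 / norm3 (B x) ^ 2) * (pd k ρ x) / ρ x - 2 * (cpar (S x) * ρ x ^ 3 / norm3 (B x) ^ 2) * (pd k (fun y => norm3 (B y)) x) / norm3 (B x)) + 2 * ((cperp (S x) * ρ x * norm3 (B x)) * (pd k (fun y => Real.log (cperp (S y))) x) + (cperp (S x) * ρ x * norm3 (B x)) * (pd k ρ x) / ρ x + (cperp (S x) * ρ x * norm3 (B x)) * (pd k (fun y => norm3 (B y)) x) / norm3 (B x))) * (2 * ρ x) - (3 * (cpar (S x) * ρ x ^ 3 / norm3 (B x) ^ 2) + 2 * (cperp (S x) * ρ x * norm3 (B x))) * (2 * (pd k ρ x))) / (2 * ρ x) ^ 2 := by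
    intro k
    rw [pd_div (((differentiableAt_const (3:ℝ)).fun_mul hppard).fun_add
        ((differentiableAt_const (2:ℝ)).fun_mul hpperpd))
        ((differentiableAt_const (2:ℝ)).fun_mul (hρd x)) (by positivity),
      pd_add ((differentiableAt_const (3:ℝ)).fun_mul hppard)
        ((differentiableAt_const (2:ℝ)).fun_mul hpperpd),
      pd_mul (differentiableAt_const (3:ℝ)) hppard,
      pd_mul (differentiableAt_const (2:ℝ)) hpperpd,
      pd_mul (differentiableAt_const (2:ℝ)) (hρd x),
      G1 k, G2 k]
    simp only [pd_const]
    ring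
  have F5diag : ∀ (k i : Fin 3), pd k (fun y => cperp (S y) * ρ y * norm3 (B y)
        + (cpar (S y) * ρ y ^ 3 / norm3 (B y) ^ 2 - cperp (S y) * ρ y * norm3 (B y))
          * (B y i / norm3 (B y)) * (B y i / norm3 (B y))) x
      = ((cperp (S x) * ρ x * norm3 (B x)) * (pd k (fun y => Real.log (cperp (S y))) x) + (cperp (S x) * ρ x * norm3 (B x)) * (pd k ρ x) / ρ x + (cperp (S x) * ρ x * norm3 (B x)) * (pd k (fun y => norm3 (B y)) x) / norm3 (B x)) + (((cpar (S x) * ρ x ^ 3 / norm3 (B x) ^ 2) * (pd k (fun y => Real.log (cpar (S y))) x) + 3 * (cpar (S x) * ρ x ^ 3 / norm3 (B x) ^ 2) * (pd k ρ x) / ρ x - 2 * (cpar (S x) * ρ x ^ 3 / norm3 (B x) ^ 2) * (pd k (fun y => norm3 (B y)) x) / norm3 (B x)) - ((cperp (S x) * ρ x * norm3 (B x)) * (pd k (fun y => Real.log (cperp (S y))) x) + (cperp (S x) * ρ x * norm3 (B x)) * (pd k ρ x) / ρ x + (cperp (S x) * ρ x * norm3 (B x)) * (pd k (fun y => norm3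 (B y)) x) / norm3 (B x))) * (B x i / norm3 (B x)) * (B x i / norm3 (B x))
        + ((cpar (S x) * ρ x ^ 3 / norm3 (B x) ^ 2) - (cperp (S x) * ρ x * norm3 (B x))) * ((pd k (fun y => B y i / norm3 (B y)) x) * (B x i / norm3 (B x)) + (B x i / norm3 (B x)) * (pd k (fun y => B y i / norm3 (B y)) x)) := by
    intro k i
    rw [pd_add hpperpd ((hsub.fun_mul (hτ i)).fun_mul (hτ i)),
      pd_mul (hsub.fun_mul (hτ i)) (hτ i), pd_mul hsub (hτ i), pd_sub hppard hpperpd,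
      G1 k, G2 k]
    ring
  have F5off : ∀ (k i j : Fin 3), pd k (fun y =>
        (cpar (S y) * ρ y ^ 3 / norm3 (B y) ^ 2 - cperp (S y) * ρ y * norm3 (B y))
          * (B y i / norm3 (B y)) * (B y j / norm3 (B y))) x
      = (((cpar (S x) * ρ x ^ 3 / norm3 (B x) ^ 2) * (pd k (fun y => Real.log (cpar (S y))) x) + 3 * (cpar (S x) * ρ x ^ 3 / norm3 (B x) ^ 2) * (pd k ρ x) / ρ x - 2 * (cpar (S x) * ρ x ^ 3 / norm3 (B x) ^ 2) * (pd k (fun y => norm3 (B y)) x) / norm3 (B x)) - ((cperp (S x) * ρ x * norm3 (B x)) * (pd k (fun y => Real.log (cperp (S y))) x) + (cperp (S x) * ρ x * norm3 (B x)) * (pd k ρ x) / ρ x + (cperp (S x) * ρ x * norm3 (B x)) * (pd k (fun y => norm3 (B y)) x) / norm3 (B x))) * (B x i / norm3 (B x)) * (B x j / norm3 (B x))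
        + ((cpar (S x) * ρ x ^ 3 / norm3 (B x) ^ 2) - (cperp (S x) * ρ x * norm3 (B x))) * ((pd k (fun y => B y i / norm3 (B y)) x) * (B x j / norm3 (B x)) + (B x i / norm3 (B x)) * (pd k (fun y => B y j / norm3 (B y)) x)) := by
    intro k i j
    rw [pd_mul (hsub.fun_mul (hτ i)) (hτ j), pd_mul hsub (hτ i), pd_sub hppard hpperpd,
      G1 k, G2 k]
    ring
  simp only [tau3, Fin.sum_univ_three]
  simp only [Fin.reduceEq, reduceIte, mul_one, mul_zero, zero_add, add_zero]
  rw [F5diag 0 0, F5diag 1 1, F5diag 2 2]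
  simp only [F5off, F4]
  linear_combination main_algebra (B x 0 / norm3 (B x)) (B x 1 / norm3 (B x)) (B x 2 / norm3 (B x))
    (pd 0 (fun y => B y 0 / norm3 (B y)) x) (pd 0 (fun y => B y 1 / norm3 (B y)) x) (pd 0 (fun y => B y 2 / norm3 (B y)) x)
    (pd 1 (fun y => B y 0 / norm3 (B y)) x) (pd 1 (fun y => B y 1 / norm3 (B y)) x) (pd 1 (fun y => B y 2 / norm3 (B y)) x)
    (pd 2 (fun y => B y 0 / norm3 (B y)) x) (pd 2 (fun y => B y 1 / norm3 (B y)) x) (pd 2 (fun y => B y 2 / norm3 (B y)) x)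
    (pd 0 (fun y => norm3 (B y)) x) (pd 1 (fun y => norm3 (B y)) x) (pd 2 (fun y => norm3 (B y)) x)
    (pd 0 ρ x) (pd 1 ρ x) (pd 2 ρ x)
    (pd 0 (fun y => Real.log (cpar (S y))) x) (pd 1 (fun y => Real.log (cpar (S y))) x) (pd 2 (fun y => Real.log (cpar (S y))) x)
    (pd 0 (fun y => Real.log (cperp (S y))) x) (pd 1 (fun y => Real.log (cperp (S y))) x) (pd 2 (fun y => Real.log (cperp (S y))) x)
    (norm3 (B x)) (ρ x) (cpar (S x) * ρ x ^ 3 / norm3 (B x) ^ 2) (cperp (S x) * ρ x * norm3 (B x))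
    hbx hrx R1 (R2 0) (R2 1) (R2 2) R3
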